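/- Let (λ, μ) be a pair of partitions for m, i.e. μ = (μ_1,...,μ_r) is a composition of m and λ = (λ_1, λ_2, ...) satisfies λ_{i+1} ≤ λ_i ≤ μ_i for all i. Define T = { e ∈ X_{J(μ)} : the sequence t of type μ with w(t) = e^{-1}w_{J(μ)} has at least λ_i good i's for every i }. Then T satisfies the Schreier property: every prefix of an element of T lies in T. -/

import Mathlib

/- Conventions as in the other statements: `S_m = Equiv.Perm (Fin m)`, 0-based, the
paper product `ab` is `b * a` in Mathlib (so `e⁻¹w_{J(μ)}` is `w0 * e⁻¹`,
the right coset `W_{J(μ)}x` is `{x * u}`, and "`d` is a prefix of `e`" is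
`invLen e = invLen d + invLen (e * d⁻¹)`); length = number of inversions; symbols of
sequences are 0-based, and `lam i` denotes the paper's `λ_{i+1}`. -/

def invLen {m : ℕ} (w : Equiv.Perm (Fin m)) : ℕ :=
  (Finset.univ.filter (fun p : Fin m × Fin m => p.1 < p.2 ∧ w p.2 < w p.1)).card

def inYoung {m : ℕ} (μ : Composition m) (u : Equiv.Perm (Fin m)) : Prop :=
  ∀ i : Fin m, μ.index (u i) = μ.index i

def isMinRep {m : ℕ} (μ : Composition m) (x : Equiv.Perm (Fin m)) : Prop :=
  ∀ u : Equiv.Perm (Fin m), inYoung μ u → invLen x ≤ invLen (x * u)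

def ofTypeL {m : ℕ} (μ : Composition m) (t : List ℕ) : Prop :=
  t.length = m ∧ (∀ a ∈ t, a < μ.length) ∧
    ∀ k : Fin μ.length, t.count (k : ℕ) = μ.blocksFun k

def seqPermVal {m : ℕ} (μ : Composition m) (t : List ℕ) (p : ℕ) : ℕ :=
  μ.sizeUpTo (t.getD p 0 + 1) - 1 - (t.take p).count (t.getD p 0)

def isSeqPerm {m : ℕ} (μ : Composition m) (t : List ℕ) (w : Equiv.Perm (Fin m)) : Prop :=
  ∀ p : Fin m, (w p : ℕ) = seqPermVal μ t (p : ℕ)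

def goodStep (g : ℕ → ℕ) (a : ℕ) : ℕ → ℕ :=
  if a = 0 ∨ g a < g (a - 1) then Function.update g a (g a + 1) else g

def goodCounts (t : List ℕ) : ℕ → ℕ :=
  t.foldl goodStep (fun _ => 0)

namespace Stmt8Aux

variable {m : ℕ}


variable {m : ℕ}

lemma invLen_le_add (x y : Equiv.Perm (Fin m)) : invLen (x * y) ≤ invLen x + invLen y := by
  classical
  set S := Finset.univ.filter
    (fun p : Fin m × Fin m => p.1 < p.2 ∧ (x*y) p.2 < (x*y) p.1) with hS
  have hsub : S ⊆ (S.filter (fun p => y p.2 < y p.1)) ∪ (S.filter (fun p => ¬ y p.2 < y p.1)) := by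
    intro p hp
    by_cases h : y p.2 < y p.1
    · exact Finset.mem_union_left _ (Finset.mem_filter.mpr ⟨hp, h⟩)
    · exact Finset.mem_union_right _ (Finset.mem_filter.mpr ⟨hp, h⟩)
  have h1 : (S.filter (fun p => y p.2 < y p.1)).card ≤ invLen y := by
    apply Finset.card_le_card
    intro p hp
    simp only [hS, Finset.mem_filter, Finset.mem_univ, true_and] at hp ⊢
    exact ⟨hp.1.1, hp.2⟩
  have h2 : (S.filter (fun p => ¬ y p.2 < y p.1)).card ≤ invLen x := by
    apply Finset.card_le_card_of_injOn (fun p => (y p.1, y p.2))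
    · intro p hp
      simp only [hS, Finset.coe_filter, Finset.mem_coe, Set.mem_setOf_eq, Finset.mem_filter, Finset.mem_univ, true_and] at hp ⊢
      obtain ⟨⟨h12, hxy⟩, hny⟩ := hp
      have hne : y p.1 ≠ y p.2 := fun h => absurd (y.injective h) (ne_of_lt h12)
      exact ⟨lt_of_le_of_ne (not_lt.mp hny) hne, by simpa using hxy⟩
    · intro p _ q _ h
      have h1 := y.injective (congrArg Prod.fst h)
      have h2 := y.injective (congrArg Prod.snd h)
      exact Prod.ext h1 h2
  calc S.card ≤ _ := Finset.card_le_card hsub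
    _ ≤ (S.filter (fun p => y p.2 < y p.1)).card + (S.filter (fun p => ¬ y p.2 < y p.1)).card :=
      Finset.card_union_le _ _
    _ ≤ invLen x + invLen y := by omega

lemma invLen_inv (w : Equiv.Perm (Fin m)) : invLen w⁻¹ = invLen w := by
  classical
  apply Finset.card_bij' (fun p _ => ((w⁻¹ p.2 : Fin m), (w⁻¹ p.1 : Fin m)))
    (fun p _ => ((w p.2 : Fin m), (w p.1 : Fin m)))
  · intro p hp
    simp only [Finset.mem_filter, Finset.mem_univ, true_and] at hp ⊢
    exact ⟨hp.2, by simpa using hp.1⟩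
  · intro p hp
    simp only [Finset.mem_filter, Finset.mem_univ, true_and] at hp ⊢
    exact ⟨hp.2, by simpa using hp.1⟩
  · intro p _; simp
  · intro p _; simp

lemma invLen_one : invLen (1 : Equiv.Perm (Fin m)) = 0 := by
  simp only [invLen]
  rw [Finset.card_eq_zero, Finset.filter_eq_empty_iff]
  rintro p -
  simp only [Equiv.Perm.one_apply]
  omega



variable {m : ℕ}

lemma swap_coe {j : ℕ} (hj : j + 1 < m) (p : Fin m) :
    ((Equiv.swap (⟨j, by omega⟩ : Fin m) ⟨j+1, hj⟩) p : ℕ)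
      = if (p : ℕ) = j then j+1 else if (p : ℕ) = j+1 then j else p := by
  rcases eq_or_ne p ⟨j, by omega⟩ with h | h1
  · subst h; simp
  · rcases eq_or_ne p ⟨j+1, hj⟩ with h | h2
    · subst h
      simp [Equiv.swap_apply_right, Fin.ext_iff]
    · rw [Equiv.swap_apply_of_ne_of_ne h1 h2]
      rw [Fin.ne_iff_vne] at h1 h2
      simp only [Fin.val] at h1 h2 ⊢
      rw [if_neg h1, if_neg h2]

lemma swap_lt {j : ℕ} (hj : j + 1 < m) (p q : Fin m) (hpq : p < q)
    (hne : ¬ ((p : ℕ) = j ∧ (q : ℕ) = j + 1)) :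
    (Equiv.swap (⟨j, by omega⟩ : Fin m) ⟨j+1, hj⟩) p
      < (Equiv.swap (⟨j, by omega⟩ : Fin m) ⟨j+1, hj⟩) q := by
  rw [Fin.lt_def, swap_coe hj, swap_coe hj]
  rw [Fin.lt_def] at hpq
  split_ifs <;> omega

lemma invLen_mul_swap {j : ℕ} (hj : j + 1 < m) (w : Equiv.Perm (Fin m))
    (h : w ⟨j, by omega⟩ < w ⟨j+1, hj⟩) :
    invLen (w * Equiv.swap (⟨j, by omega⟩ : Fin m) ⟨j+1, hj⟩) = invLen w + 1 := by
  classical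
  set a : Fin m := ⟨j, by omega⟩ with ha
  set b : Fin m := ⟨j+1, hj⟩ with hb
  set s := Equiv.swap a b with hs
  set S' := Finset.univ.filter
    (fun p : Fin m × Fin m => p.1 < p.2 ∧ (w * s) p.2 < (w * s) p.1) with hS'
  set S := Finset.univ.filter
    (fun p : Fin m × Fin m => p.1 < p.2 ∧ w p.2 < w p.1) with hSdef
  have hmem : (a, b) ∈ S' := by
    simp only [hS', Finset.mem_filter, Finset.mem_univ, true_and]
    constructor
    · rw [Fin.lt_def]; simp [ha, hb]
    · simpa [hs, Equiv.swap_apply_left, Equiv.swap_apply_right] using h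
  have hnmem : (a, b) ∉ S := by
    simp only [hSdef, Finset.mem_filter, Finset.mem_univ, true_and]
    rintro ⟨-, h2⟩
    exact absurd h (not_lt.mpr h2.le)
  have key : (S'.erase (a, b)).card = (S.erase (a, b)).card := by
    apply Finset.card_bij' (fun p _ => ((s p.1 : Fin m), (s p.2 : Fin m)))
      (fun p _ => ((s p.1 : Fin m), (s p.2 : Fin m)))
    · intro p hp
      rw [Finset.mem_erase] at hp ⊢
      obtain ⟨hne, hp⟩ := hp
      simp only [hS', hSdef, Finset.mem_filter, Finset.mem_univ, true_and] at hp ⊢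
      obtain ⟨h12, hw⟩ := hp
      have hnej : ¬ ((p.1 : ℕ) = j ∧ (p.2 : ℕ) = j + 1) := by
        rintro ⟨e1, e2⟩
        apply hne
        have : p.1 = a := Fin.ext e1
        have : p.2 = b := Fin.ext e2
        exact Prod.ext ‹p.1 = a› ‹p.2 = b›
      refine ⟨?_, swap_lt hj p.1 p.2 h12 hnej, by simpa using hw⟩
      · rintro hEq
        have e1 : s p.1 = a := congrArg Prod.fst hEq
        have e2 : s p.2 = b := congrArg Prod.snd hEq
        have : p.1 = s a := by rw [← e1]; simp [hs]
        have h1 : p.1 = b := by simpa [hs] using this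
        have : p.2 = s b := by rw [← e2]; simp [hs]
        have h2 : p.2 = a := by simpa [hs] using this
        rw [h1, h2] at h12
        rw [Fin.lt_def] at h12; simp [ha, hb] at h12
    · intro p hp
      rw [Finset.mem_erase] at hp ⊢
      obtain ⟨hne, hp⟩ := hp
      simp only [hS', hSdef, Finset.mem_filter, Finset.mem_univ, true_and] at hp ⊢
      obtain ⟨h12, hw⟩ := hp
      have hnej : ¬ ((p.1 : ℕ) = j ∧ (p.2 : ℕ) = j + 1) := by
        rintro ⟨e1, e2⟩
        exact hne (Prod.ext (Fin.ext e1) (Fin.ext e2))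
      refine ⟨?_, swap_lt hj p.1 p.2 h12 hnej, ?_⟩
      · rintro hEq
        have e1 : s p.1 = a := congrArg Prod.fst hEq
        have e2 : s p.2 = b := congrArg Prod.snd hEq
        have h1 : p.1 = b := by
          have : p.1 = s a := by rw [← e1]; simp [hs]
          simpa [hs] using this
        have h2 : p.2 = a := by
          have : p.2 = s b := by rw [← e2]; simp [hs]
          simpa [hs] using this
        rw [h1, h2] at h12
        rw [Fin.lt_def] at h12; simp [ha, hb] at h12
      · simpa [hs, Equiv.Perm.mul_apply] using hw
    · intro p _; simp [hs]
    · intro p _; simp [hs]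
  have h1 : S'.card = (S'.erase (a,b)).card + 1 := by
    rw [Finset.card_erase_of_mem hmem]
    have : 0 < S'.card := Finset.card_pos.mpr ⟨_, hmem⟩
    omega
  have h2 : (S.erase (a,b)) = S := Finset.erase_eq_of_notMem hnmem
  show S'.card = S.card + 1
  rw [h1, key, h2]



variable {m : ℕ}



lemma invLen_mul_swap' {j : ℕ} (hj : j + 1 < m) (w : Equiv.Perm (Fin m))
    (h : w ⟨j+1, hj⟩ < w ⟨j, by omega⟩) :
    invLen (w * Equiv.swap (⟨j, by omega⟩ : Fin m) ⟨j+1, hj⟩) + 1 = invLen w := by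
  set s := Equiv.swap (⟨j, by omega⟩ : Fin m) ⟨j+1, hj⟩ with hs
  have h2 : (w * s) ⟨j, by omega⟩ < (w * s) ⟨j+1, hj⟩ := by
    simpa [hs, Equiv.Perm.mul_apply, Equiv.swap_apply_left, Equiv.swap_apply_right] using h
  have := invLen_mul_swap hj (w * s) h2
  have hss : w * s * s = w := by
    rw [mul_assoc]
    simp [hs, Equiv.swap_mul_self]
  rw [hss] at this
  omega

lemma invLen_swap {j : ℕ} (hj : j + 1 < m) :
    invLen (Equiv.swap (⟨j, by omega⟩ : Fin m) ⟨j+1, hj⟩) = 1 := by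
  have h : (1 : Equiv.Perm (Fin m)) ⟨j, by omega⟩ < (1 : Equiv.Perm (Fin m)) ⟨j+1, hj⟩ := by
    simp [Fin.lt_def]
  have := invLen_mul_swap hj 1 h
  rwa [one_mul, invLen_one] at this

lemma strictMono_of_adj (w : Equiv.Perm (Fin m))
    (h : ∀ j (hj : j + 1 < m), w ⟨j, by omega⟩ < w ⟨j+1, hj⟩) : StrictMono w := by
  have key : ∀ (jq : ℕ) (hq : jq < m) (jp : ℕ) (hp : jp < m), jp < jq →
      w ⟨jp, hp⟩ < w ⟨jq, hq⟩ := by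
    intro jq
    induction jq with
    | zero => omega
    | succ j ih =>
      intro hq jp hp hlt
      rcases eq_or_lt_of_le (Nat.lt_succ_iff.mp hlt) with hEq | hlt'
      · subst hEq; exact h jp hq
      · exact lt_trans (ih (by omega) jp hp hlt') (h j hq)
  intro p q hpq
  have := key q q.2 p p.2 (by exact hpq)
  simpa using this

lemma perm_eq_one_of_strictMono (w : Equiv.Perm (Fin m)) (hw : StrictMono w) : w = 1 := by
  have hinv : StrictMono (w⁻¹ : Equiv.Perm (Fin m)) := by
    intro p q hpq
    rcases lt_trichotomy (w⁻¹ p) (w⁻¹ q) with h | h | h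
    · exact h
    · exfalso
      apply ne_of_lt hpq
      simpa using congrArg w h
    · have := hw h
      simp only [Equiv.Perm.coe_inv, Equiv.apply_symm_apply] at this
      exact absurd this (not_lt.mpr hpq.le)
  haveI : WellFoundedLT (Fin m) := Finite.to_wellFoundedLT
  ext p
  have h1 : p ≤ w p := hw.le_apply
  have h2 : w p ≤ w⁻¹ (w p) := hinv.le_apply
  simp only [Equiv.Perm.coe_inv, Equiv.symm_apply_apply] at h2
  simp [le_antisymm h2 h1]

lemma eq_one_of_invLen_zero (w : Equiv.Perm (Fin m)) (h : invLen w = 0) : w = 1 := by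
  apply perm_eq_one_of_strictMono
  intro p q hpq
  have hemp : ∀ p' : Fin m × Fin m, ¬ (p'.1 < p'.2 ∧ w p'.2 < w p'.1) := by
    intro p' hp'
    have : (p' ∈ Finset.univ.filter
        (fun p : Fin m × Fin m => p.1 < p.2 ∧ w p.2 < w p.1)) := by
      simp [hp'.1, hp'.2]
    rw [Finset.card_eq_zero.mp h] at this
    simpa using this
  have := hemp (p, q)
  simp only [not_and, not_lt] at this
  have hle := this hpq
  have hne : w p ≠ w q := fun hh => (ne_of_lt hpq) (w.injective hh)
  exact lt_of_le_of_ne hle hne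

lemma exists_descent (w : Equiv.Perm (Fin m)) (hw : w ≠ 1) :
    ∃ j, ∃ hj : j + 1 < m, w ⟨j+1, hj⟩ < w ⟨j, by omega⟩ := by
  by_contra hcon
  push_neg at hcon
  apply hw
  apply perm_eq_one_of_strictMono
  apply strictMono_of_adj
  intro j hj
  have := hcon j hj
  have hne : w ⟨j, by omega⟩ ≠ w ⟨j+1, hj⟩ := by
    intro hh
    have := w.injective hh
    rw [Fin.ext_iff] at this; simp at this
  exact lt_of_le_of_ne this hne



variable {m : ℕ}


-- index lemmas
lemma index_unique (μ : Composition m) (jf : Fin m) (k : Fin μ.length)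
    (h1 : μ.sizeUpTo (k : ℕ) ≤ (jf : ℕ)) (h2 : (jf : ℕ) < μ.sizeUpTo ((k : ℕ) + 1)) :
    μ.index jf = k := by
  rcases lt_trichotomy (μ.index jf) k with h | h | h
  · exfalso
    have hlt := μ.lt_sizeUpTo_index_succ jf
    rw [Fin.val_succ] at hlt
    have h' : (μ.index jf : ℕ) < (k : ℕ) := h
    have hmono := μ.monotone_sizeUpTo (show ((μ.index jf : ℕ) + 1) ≤ (k : ℕ) by omega)
    omega
  · exact h
  · exfalso
    have hle := μ.sizeUpTo_index_le jf
    have h' : (k : ℕ) < (μ.index jf : ℕ) := h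
    have hmono := μ.monotone_sizeUpTo (show ((k : ℕ) + 1) ≤ (μ.index jf : ℕ) by omega)
    omega

lemma index_mono (μ : Composition m) (p q : Fin m) (h : p ≤ q) :
    μ.index p ≤ μ.index q := by
  by_contra hcon
  push_neg at hcon
  have h1 := μ.lt_sizeUpTo_index_succ q
  rw [Fin.val_succ] at h1
  have h2 := μ.sizeUpTo_index_le p
  have hcon' : (μ.index q : ℕ) < (μ.index p : ℕ) := hcon
  have hmono := μ.monotone_sizeUpTo (show ((μ.index q : ℕ) + 1) ≤ (μ.index p : ℕ) by omega)
  have hpq : (p : ℕ) ≤ (q : ℕ) := h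
  omega

-- minRep lemmas
lemma prefix_minRep (μ : Composition m) (e d : Equiv.Perm (Fin m)) (he : isMinRep μ e)
    (hpre : invLen e = invLen d + invLen (e * d⁻¹)) : isMinRep μ d := by
  intro u hu
  have h1 := he u hu
  have h2 : invLen (e * u) ≤ invLen (e * d⁻¹) + invLen (d * u) := by
    have : e * u = (e * d⁻¹) * (d * u) := by group
    rw [this]
    exact invLen_le_add _ _
  omega

lemma swap_inYoung (μ : Composition m) {j : ℕ} (hj : j + 1 < m)
    (hidx : μ.index ⟨j, by omega⟩ = μ.index ⟨j+1, hj⟩) :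
    inYoung μ (Equiv.swap (⟨j, by omega⟩ : Fin m) ⟨j+1, hj⟩) := by
  intro i
  rcases eq_or_ne i ⟨j, by omega⟩ with h | h1
  · subst h; rw [Equiv.swap_apply_left, hidx]
  · rcases eq_or_ne i ⟨j+1, hj⟩ with h | h2
    · subst h; rw [Equiv.swap_apply_right, hidx]
    · rw [Equiv.swap_apply_of_ne_of_ne h1 h2]

lemma minRep_mono_on_block (μ : Composition m) (e : Equiv.Perm (Fin m)) (he : isMinRep μ e) :
    ∀ p q : Fin m, p < q → μ.index p = μ.index q → e p < e q := by
  have hconsec : ∀ j (hj : j + 1 < m), μ.index ⟨j, by omega⟩ = μ.index ⟨j+1, hj⟩ →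
      e ⟨j, by omega⟩ < e ⟨j+1, hj⟩ := by
    intro j hj hidx
    by_contra hcon
    have hne : e ⟨j+1, hj⟩ ≠ e ⟨j, by omega⟩ := by
      intro hh
      have := e.injective hh
      rw [Fin.ext_iff] at this; simp at this
    have hlt : e ⟨j+1, hj⟩ < e ⟨j, by omega⟩ := lt_of_le_of_ne (not_lt.mp hcon) hne
    have hdec := invLen_mul_swap' hj e hlt
    have := he _ (swap_inYoung μ hj hidx)
    omega
  have key : ∀ (jq : ℕ) (hq : jq < m) (jp : ℕ) (hp : jp < m), jp < jq →
      μ.index ⟨jp, hp⟩ = μ.index ⟨jq, hq⟩ → e ⟨jp, hp⟩ < e ⟨jq, hq⟩ := by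
    intro jq
    induction jq with
    | zero => omega
    | succ j ih =>
      intro hq jp hp hlt hidx
      rcases eq_or_lt_of_le (Nat.lt_succ_iff.mp hlt) with hEq | hlt'
      · subst hEq; exact hconsec jp hq hidx
      · have hj' : j < m := by omega
        have hle1 : μ.index ⟨jp, hp⟩ ≤ μ.index ⟨j, hj'⟩ :=
          index_mono μ _ _ (by rw [Fin.le_def]; simpa using hlt'.le)
        have hle2 : μ.index ⟨j, hj'⟩ ≤ μ.index ⟨j+1, hq⟩ :=
          index_mono μ _ _ (by rw [Fin.le_def]; simp)
        have heq1 : μ.index ⟨jp, hp⟩ = μ.index ⟨j, hj'⟩ := le_antisymm hle1 (by rw [hidx]; exact hle2)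
        have heq2 : μ.index ⟨j, hj'⟩ = μ.index ⟨j+1, hq⟩ := by rw [← heq1, hidx]
        exact lt_trans (ih hj' jp hp hlt' heq1) (hconsec j hq heq2)
  intro p q hpq hidx
  have := key q q.2 p p.2 (by exact hpq) (by simpa using hidx)
  simpa using this

-- sequence lemmas
lemma seq_entry_lt (μ : Composition m) (t : List ℕ) (ht : ofTypeL μ t) (p : Fin m) :
    t.getD (p : ℕ) 0 < μ.length := by
  obtain ⟨hlen, hmem, -⟩ := ht
  apply hmem
  have hp : (p : ℕ) < t.length := by rw [hlen]; exact p.2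
  rw [List.getD_eq_getElem _ _ hp]
  exact List.getElem_mem hp

lemma seq_count_lt (μ : Composition m) (t : List ℕ) (ht : ofTypeL μ t) (p : Fin m) :
    ((t.take (p : ℕ)).count (t.getD (p : ℕ) 0)) + 1
      ≤ μ.blocksFun ⟨t.getD (p : ℕ) 0, seq_entry_lt μ t ht p⟩ := by
  have hlen := ht.1
  have hp : (p : ℕ) < t.length := by rw [hlen]; exact p.2
  have htot : t.count (t.getD (p : ℕ) 0)
      = μ.blocksFun ⟨t.getD (p : ℕ) 0, seq_entry_lt μ t ht p⟩ := by
    have := ht.2.2 ⟨t.getD (p : ℕ) 0, seq_entry_lt μ t ht p⟩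
    simpa using this
  have hsplit : t.count (t.getD (p : ℕ) 0) = (t.take (p : ℕ)).count (t.getD (p : ℕ) 0)
      + (t.drop (p : ℕ)).count (t.getD (p : ℕ) 0) := by
    rw [← List.count_append, List.take_append_drop]
  have hdropmem : t.getD (p : ℕ) 0 ∈ t.drop (p : ℕ) := by
    have h0 : 0 < (t.drop (p : ℕ)).length := by
      rw [List.length_drop]; omega
    have hg : (t.drop (p : ℕ))[0] = t[(p : ℕ)] := by
      simp [List.getElem_drop]
    rw [← List.getD_eq_getElem t 0 hp] at hg
    rw [← hg]
    exact List.getElem_mem h0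
  have : 1 ≤ (t.drop (p : ℕ)).count (t.getD (p : ℕ) 0) := List.one_le_count_iff.mpr hdropmem
  omega

lemma seq_index_eq (μ : Composition m) (t : List ℕ) (w : Equiv.Perm (Fin m))
    (ht : ofTypeL μ t) (htw : isSeqPerm μ t w) (p : Fin m) :
    ((μ.index (w p)) : ℕ) = t.getD (p : ℕ) 0 := by
  have hklt := seq_entry_lt μ t ht p
  have hval := htw p
  unfold seqPermVal at hval
  have hcnt := seq_count_lt μ t ht p
  have hblocks : μ.sizeUpTo (t.getD (p : ℕ) 0) + μ.blocksFun ⟨t.getD (p : ℕ) 0, hklt⟩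
      = μ.sizeUpTo (t.getD (p : ℕ) 0 + 1) := (μ.sizeUpTo_succ' ⟨t.getD (p : ℕ) 0, hklt⟩).symm
  have hbpos : 1 ≤ μ.blocksFun ⟨t.getD (p : ℕ) 0, hklt⟩ := μ.one_le_blocksFun _
  have h1 : μ.sizeUpTo (t.getD (p : ℕ) 0) ≤ (w p : ℕ) := by omega
  have h2 : (w p : ℕ) < μ.sizeUpTo (t.getD (p : ℕ) 0 + 1) := by omega
  have := index_unique μ (w p) ⟨t.getD (p : ℕ) 0, hklt⟩ h1 h2
  rw [this]

lemma seq_unique (μ : Composition m) (t t' : List ℕ) (w : Equiv.Perm (Fin m))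
    (ht : ofTypeL μ t) (htw : isSeqPerm μ t w)
    (ht' : ofTypeL μ t') (htw' : isSeqPerm μ t' w) : t' = t := by
  apply List.ext_getElem (by rw [ht'.1, ht.1])
  intro i h1 h2
  have hi : i < m := by rw [← ht.1]; exact h2
  have e1 := seq_index_eq μ t w ht htw ⟨i, hi⟩
  have e2 := seq_index_eq μ t' w ht' htw' ⟨i, hi⟩
  simp only at e1 e2
  rw [List.getD_eq_getElem _ _ h1] at e2
  rw [List.getD_eq_getElem _ _ h2] at e1
  rw [← e1, ← e2]



lemma goodStep_apply (g : ℕ → ℕ) (a i : ℕ) :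
    goodStep g a i = if (a = 0 ∨ g a < g (a - 1)) ∧ i = a then g a + 1 else g i := by
  unfold goodStep
  split_ifs with h1 h2 h3
  · rw [h2.2, Function.update_self]
  · rw [Function.update_apply]
    rw [if_neg]
    intro hh
    exact h2 ⟨h1, hh⟩
  · exact absurd h3.1 h1
  · rfl

lemma goodStep_apply_ne (g : ℕ → ℕ) (a i : ℕ) (hi : i ≠ a) : goodStep g a i = g i := by
  rw [goodStep_apply, if_neg (fun hc => hi hc.2)]

lemma goodStep_apply_self (g : ℕ → ℕ) (a : ℕ) :
    goodStep g a a = if a = 0 ∨ g a < g (a - 1) then g a + 1 else g a := by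
  rw [goodStep_apply]
  split_ifs with h1 h2 h3 <;> first | rfl | (exfalso; tauto)

lemma le_goodStep (g : ℕ → ℕ) (a i : ℕ) : g i ≤ goodStep g a i := by
  rw [goodStep_apply]
  split_ifs with h1
  · rw [h1.2]; omega
  · exact le_rfl

lemma goodStep_mono {g h : ℕ → ℕ} (hle : ∀ i, g i ≤ h i) (x : ℕ) (i : ℕ) :
    goodStep g x i ≤ goodStep h x i := by
  by_cases hi : i = x
  · subst hi
    rw [goodStep_apply_self, goodStep_apply_self]
    have h1 := hle i
    have h2 := hle (i - 1)
    split_ifs <;> omega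
  · rw [goodStep_apply_ne _ _ _ hi, goodStep_apply_ne _ _ _ hi]
    exact hle i

lemma goodFold_mono (r : List ℕ) : ∀ g h : ℕ → ℕ, (∀ i, g i ≤ h i) →
    ∀ i, (r.foldl goodStep g) i ≤ (r.foldl goodStep h) i := by
  induction r with
  | nil => intro g h hle i; exact hle i
  | cons x r ih =>
    intro g h hle i
    simp only [List.foldl_cons]
    exact ih _ _ (goodStep_mono hle x) i

lemma good_pair {g : ℕ → ℕ} {x y : ℕ} (hyx : y < x) (i : ℕ) :
    goodStep (goodStep g x) y i ≤ goodStep (goodStep g y) x i := by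
  have hxy : x ≠ y := by omega
  have hy1x : y - 1 ≠ x := by omega
  by_cases hiy : i = y
  · subst hiy
    have e1 : (goodStep g x) i = g i := goodStep_apply_ne _ _ _ (by omega)
    have e2 : (goodStep g x) (i - 1) = g (i - 1) := goodStep_apply_ne _ _ _ (by omega)
    have hL : goodStep (goodStep g x) i i
        = if i = 0 ∨ g i < g (i - 1) then g i + 1 else g i := by
      rw [goodStep_apply_self, e1, e2]
    have hR : goodStep (goodStep g i) x i
        = if i = 0 ∨ g i < g (i - 1) then g i + 1 else g i := by
      rw [goodStep_apply_ne _ _ _ (by omega : i ≠ x), goodStep_apply_self]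
    rw [hL, hR]
  · by_cases hix : i = x
    · subst hix
      have hle1 : g (i - 1) ≤ goodStep g y (i - 1) := le_goodStep g y (i - 1)
      have hL : goodStep (goodStep g i) y i = (goodStep g i) i :=
        goodStep_apply_ne _ _ _ (Ne.symm (by omega : y ≠ i))
      have e1 : (goodStep g y) i = g i := goodStep_apply_ne _ _ _ (by omega)
      rw [hL, goodStep_apply_self, goodStep_apply_self, e1]
      split_ifs with c1 c2 <;> omega
    · rw [goodStep_apply_ne _ _ _ hiy, goodStep_apply_ne _ _ _ hix,
        goodStep_apply_ne _ _ _ hix, goodStep_apply_ne _ _ _ hiy]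

lemma good_swap (A B : List ℕ) (a b : ℕ) (hab : a < b) (i : ℕ) :
    goodCounts (A ++ b :: a :: B) i ≤ goodCounts (A ++ a :: b :: B) i := by
  unfold goodCounts
  rw [List.foldl_append, List.foldl_append]
  simp only [List.foldl_cons]
  exact goodFold_mono B _ _ (fun j => good_pair hab j) i



variable {m : ℕ}


lemma spv_lt (μ : Composition m) (A B C : List ℕ) (p : ℕ) (hp : p < A.length) :
    seqPermVal μ (A ++ B) p = seqPermVal μ (A ++ C) p := by
  unfold seqPermVal
  rw [List.getD_append _ _ _ _ hp, List.getD_append _ _ _ _ hp,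
    List.take_append, List.take_append,
    Nat.sub_eq_zero_of_le hp.le]
  simp

lemma spv_mid1 (μ : Composition m) (A B : List ℕ) (a b : ℕ) (hab : a ≠ b) :
    seqPermVal μ (A ++ a :: b :: B) A.length = seqPermVal μ (A ++ b :: a :: B) (A.length + 1) := by
  unfold seqPermVal
  rw [List.getD_append_right _ _ _ _ le_rfl, List.getD_append_right _ _ _ _ (by omega)]
  simp only [Nat.sub_self]
  have h2 : A.length + 1 - A.length = 1 := by omega
  rw [h2]
  simp only [List.getD_cons_zero, List.getD_cons_succ]
  have e1 : (A ++ a :: b :: B).take A.length = A := by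
    rw [List.take_append, Nat.sub_self, List.take_length]
    simp
  have e2 : (A ++ b :: a :: B).take (A.length + 1) = A ++ [b] := by
    rw [List.take_append, h2,
      List.take_of_length_le (le_of_lt (Nat.lt_succ_self A.length))]
    simp
  rw [e1, e2]
  simp [List.count_append, List.count_cons, hab, Ne.symm hab]

lemma spv_mid2 (μ : Composition m) (A B : List ℕ) (a b : ℕ) (hab : a ≠ b) :
    seqPermVal μ (A ++ a :: b :: B) (A.length + 1) = seqPermVal μ (A ++ b :: a :: B) A.length := by
  unfold seqPermVal
  rw [List.getD_append_right _ _ _ _ le_rfl, List.getD_append_right _ _ _ _ (by omega)]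
  simp only [Nat.sub_self]
  have h2 : A.length + 1 - A.length = 1 := by omega
  rw [h2]
  simp only [List.getD_cons_zero, List.getD_cons_succ]
  have e1 : (A ++ a :: b :: B).take (A.length + 1) = A ++ [a] := by
    rw [List.take_append, h2,
      List.take_of_length_le (le_of_lt (Nat.lt_succ_self A.length))]
    simp
  have e2 : (A ++ b :: a :: B).take A.length = A := by
    rw [List.take_append, Nat.sub_self, List.take_length]
    simp
  rw [e1, e2]
  simp [List.count_append, List.count_cons, Ne.symm hab, hab]

lemma spv_ge (μ : Composition m) (A B : List ℕ) (a b : ℕ) (p : ℕ) (hp : A.length + 2 ≤ p) :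
    seqPermVal μ (A ++ a :: b :: B) p = seqPermVal μ (A ++ b :: a :: B) p := by
  unfold seqPermVal
  obtain ⟨q, hq⟩ : ∃ q, p - A.length = q + 2 := ⟨p - A.length - 2, by omega⟩
  rw [List.getD_append_right _ _ _ _ (by omega), List.getD_append_right _ _ _ _ (by omega), hq]
  simp only [List.getD_cons_succ]
  rw [List.take_append, List.take_append, hq]
  show μ.sizeUpTo (B.getD q 0 + 1) - 1 - _ = μ.sizeUpTo (B.getD q 0 + 1) - 1 - _
  congr 1
  simp only [List.take_succ_cons, List.count_append, List.count_cons]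
  omega

lemma seq_swap (μ : Composition m) (w : Equiv.Perm (Fin m)) (A B : List ℕ) (a b : ℕ) (j : ℕ)
    (hAlen : A.length = j) (hj : j + 1 < m) (hab : a ≠ b)
    (htw : isSeqPerm μ (A ++ b :: a :: B) w) :
    isSeqPerm μ (A ++ a :: b :: B) (w * Equiv.swap (⟨j, by omega⟩ : Fin m) ⟨j+1, hj⟩) := by
  intro p
  set s := Equiv.swap (⟨j, by omega⟩ : Fin m) ⟨j+1, hj⟩ with hs
  have hmul : (w * s) p = w (s p) := rfl
  rw [hmul, htw (s p)]
  have hcoe := swap_coe hj p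
  rw [← hs] at hcoe
  by_cases h1 : (p : ℕ) = j
  · rw [hcoe, if_pos h1, h1, ← hAlen]
    exact (spv_mid1 μ A B a b hab).symm
  · by_cases h2 : (p : ℕ) = j + 1
    · rw [hcoe, if_neg h1, if_pos h2, h2, ← hAlen]
      exact (spv_mid2 μ A B a b hab).symm
    · rw [hcoe, if_neg h1, if_neg h2]
      rcases lt_or_ge (p : ℕ) j with h | h
      · exact (spv_lt μ A _ _ (p : ℕ) (by omega)).symm
      · exact (spv_ge μ A B a b (p : ℕ) (by omega)).symm

lemma swap_perm (A B : List ℕ) (a b : ℕ) : (A ++ a :: b :: B).Perm (A ++ b :: a :: B) :=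
  List.Perm.append_left A (List.Perm.swap b a B)

lemma ofTypeL_swap (μ : Composition m) (A B : List ℕ) (a b : ℕ)
    (ht : ofTypeL μ (A ++ b :: a :: B)) : ofTypeL μ (A ++ a :: b :: B) := by
  obtain ⟨hlen, hmem, hcount⟩ := ht
  have hperm := swap_perm A B a b
  refine ⟨by rw [hperm.length_eq]; exact hlen, fun x hx => hmem x (hperm.mem_iff.mp hx),
    fun k => by rw [hperm.count_eq]; exact hcount k⟩

lemma list_decomp (t : List ℕ) (j : ℕ) (hj : j + 1 < t.length) :
    t = t.take j ++ t.getD j 0 :: t.getD (j+1) 0 :: t.drop (j+2) := by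
  rw [List.getD_eq_getElem _ _ (by omega), List.getD_eq_getElem _ _ (by omega)]
  conv_lhs => rw [← List.take_append_drop j t]
  congr 1
  rw [List.drop_eq_getElem_cons (by omega)]
  congr 1
  rw [List.drop_eq_getElem_cons (by omega)]


set_option maxHeartbeats 1000000 in
lemma main_induction (μ : Composition m) (lam : ℕ → ℕ) (w0 d : Equiv.Perm (Fin m))
    (hw0 : inYoung μ w0) :
    ∀ n (e : Equiv.Perm (Fin m)), invLen (e * d⁻¹) = n → isMinRep μ e →
    ∀ t : List ℕ, ofTypeL μ t → isSeqPerm μ t (w0 * e⁻¹) → (∀ i, lam i ≤ goodCounts t i) →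
    invLen e = invLen d + invLen (e * d⁻¹) →
    isMinRep μ d ∧ ∀ t' : List ℕ, ofTypeL μ t' → isSeqPerm μ t' (w0 * d⁻¹) →
      ∀ i, lam i ≤ goodCounts t' i := by
  intro n
  induction n using Nat.strong_induction_on with
  | _ n ih =>
  intro e hn he t ht htw hgood hpre
  by_cases hc0 : invLen (e * d⁻¹) = 0
  · have hed : e = d := mul_inv_eq_one.mp (eq_one_of_invLen_zero _ hc0)
    subst hed
    exact ⟨he, fun t' ht' htw' i => by
      rw [seq_unique μ t t' (w0 * e⁻¹) ht htw ht' htw']; exact hgood i⟩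
  · have hcne : (e * d⁻¹)⁻¹ ≠ 1 := by
      intro hh
      exact hc0 (by rw [← inv_inv (e * d⁻¹), hh, inv_one, invLen_one])
    obtain ⟨j, hj, hdesc⟩ := exists_descent ((e * d⁻¹)⁻¹) hcne
    set s := Equiv.swap (⟨j, by omega⟩ : Fin m) ⟨j+1, hj⟩ with hs
    have hss : s * s = 1 := Equiv.swap_mul_self _ _
    have hsinv : s⁻¹ = s := Equiv.swap_inv _ _
    set e₁ := s * e with he₁def
    -- length bookkeeping
    have hstep : invLen ((e * d⁻¹)⁻¹ * s) + 1 = invLen ((e * d⁻¹)⁻¹) := invLen_mul_swap' hj _ hdesc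
    have hrw1 : invLen (s * (e * d⁻¹)) = invLen ((e * d⁻¹)⁻¹ * s) := by
      have hinv : (s * (e * d⁻¹))⁻¹ = (e * d⁻¹)⁻¹ * s := by
        rw [mul_inv_rev, hsinv]
      rw [← invLen_inv (s * (e * d⁻¹)), hinv]
    have hc1len : invLen (s * (e * d⁻¹)) + 1 = invLen (e * d⁻¹) := by
      rw [hrw1, hstep, invLen_inv]
    have hc1 : e₁ * d⁻¹ = s * (e * d⁻¹) := by rw [he₁def]; group
    have hA : invLen e₁ ≤ invLen (s * (e * d⁻¹)) + invLen d := by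
      have hrw : e₁ = (s * (e * d⁻¹)) * d := by rw [he₁def]; group
      rw [hrw]
      exact invLen_le_add _ _
    have hB : invLen e ≤ invLen s + invLen e₁ := by
      have hrw : e = s * e₁ := by rw [he₁def, ← mul_assoc, hss, one_mul]
      conv_lhs => rw [hrw]
      exact invLen_le_add _ _
    have hs1 : invLen s = 1 := invLen_swap hj
    have hlen_e₁ : invLen e₁ = invLen d + invLen (s * (e * d⁻¹)) ∧ invLen e = invLen e₁ + 1 := by
      constructor <;> omega
    have hpre₁ : invLen e₁ = invLen d + invLen (e₁ * d⁻¹) := by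
      rw [hc1]; exact hlen_e₁.1
    have hpre_e : invLen e = invLen e₁ + invLen (e * e₁⁻¹) := by
      have hrw : e * e₁⁻¹ = s := by rw [he₁def, mul_inv_rev, hsinv, ← mul_assoc]; group
      rw [hrw, hs1]
      exact hlen_e₁.2
    have he₁ : isMinRep μ e₁ := prefix_minRep μ e e₁ he hpre_e
    -- descent of e⁻¹ at j
    have hinv_e₁ : e₁⁻¹ = e⁻¹ * s := by rw [he₁def, mul_inv_rev, hsinv]
    have hdesc_e : e⁻¹ ⟨j+1, hj⟩ < e⁻¹ ⟨j, by omega⟩ := by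
      rcases lt_trichotomy (e⁻¹ ⟨j+1, hj⟩) (e⁻¹ ⟨j, by omega⟩) with h | h | h
      · exact h
      · exfalso
        have := e⁻¹.injective h
        rw [Fin.ext_iff] at this
        simp at this
      · exfalso
        have hup := invLen_mul_swap hj e⁻¹ h
        rw [← hs, ← hinv_e₁] at hup
        rw [invLen_inv, invLen_inv] at hup
        omega
    -- sequence entries
    have hlen_t : t.length = m := ht.1
    have hbval : (μ.index (e⁻¹ ⟨j, by omega⟩) : ℕ) = t.getD j 0 := by
      have h1 := seq_index_eq μ t (w0 * e⁻¹) ht htw ⟨j, by omega⟩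
      rwa [Equiv.Perm.mul_apply, hw0 (e⁻¹ ⟨j, by omega⟩)] at h1
    have haval : (μ.index (e⁻¹ ⟨j+1, hj⟩) : ℕ) = t.getD (j+1) 0 := by
      have h1 := seq_index_eq μ t (w0 * e⁻¹) ht htw ⟨j+1, hj⟩
      rwa [Equiv.Perm.mul_apply, hw0 (e⁻¹ ⟨j+1, hj⟩)] at h1
    have hable : t.getD (j+1) 0 ≤ t.getD j 0 := by
      have := index_mono μ (e⁻¹ ⟨j+1, hj⟩) (e⁻¹ ⟨j, by omega⟩) hdesc_e.le
      rw [Fin.le_def] at this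
      omega
    have hablt : t.getD (j+1) 0 < t.getD j 0 := by
      rcases lt_or_eq_of_le hable with h | h
      · exact h
      · exfalso
        have hidx : μ.index (e⁻¹ ⟨j+1, hj⟩) = μ.index (e⁻¹ ⟨j, by omega⟩) := by
          apply Fin.ext
          omega
        have := minRep_mono_on_block μ e he _ _ hdesc_e hidx
        simp only [Equiv.Perm.coe_inv, Equiv.apply_symm_apply] at this
        rw [Fin.lt_def] at this
        simp at this
    -- swap the sequence
    have hdecomp : t = t.take j ++ t.getD j 0 :: t.getD (j+1) 0 :: t.drop (j+2) :=
      list_decomp t j (by omega)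
    have hAlen : (t.take j).length = j := by
      rw [List.length_take]
      omega
    have ht₁ : ofTypeL μ (t.take j ++ t.getD (j+1) 0 :: t.getD j 0 :: t.drop (j+2)) := by
      apply ofTypeL_swap
      rw [← hdecomp]
      exact ht
    have htw' : isSeqPerm μ (t.take j ++ t.getD j 0 :: t.getD (j+1) 0 :: t.drop (j+2))
        (w0 * e⁻¹) := by
      rw [← hdecomp]
      exact htw
    have htw₁ : isSeqPerm μ (t.take j ++ t.getD (j+1) 0 :: t.getD j 0 :: t.drop (j+2))
        (w0 * e₁⁻¹) := by
      have hkey := seq_swap μ (w0 * e⁻¹) (t.take j) (t.drop (j+2))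
        (t.getD (j+1) 0) (t.getD j 0) j hAlen hj (by omega) htw'
      rw [← hs] at hkey
      have : w0 * e₁⁻¹ = w0 * e⁻¹ * s := by rw [hinv_e₁, mul_assoc]
      rw [this]
      exact hkey
    have hgood₁ : ∀ i, lam i ≤
        goodCounts (t.take j ++ t.getD (j+1) 0 :: t.getD j 0 :: t.drop (j+2)) i := by
      intro i
      have h1 := hgood i
      rw [hdecomp] at h1
      exact le_trans h1 (good_swap _ _ _ _ hablt i)
    exact ih (invLen (e₁ * d⁻¹)) (by rw [hc1]; omega) e₁ rfl he₁ _ ht₁ htw₁ hgood₁ hpre₁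

end Stmt8Aux

/-- let `(λ, μ)` be a pair of partitions for `m` and let
`T = {e ∈ X_{J(μ)} : the sequence t with w(t) = e⁻¹w_{J(μ)} has ≥ λ_i good i's ∀ i}`.
Then `T` has the Schreier property: every prefix `d` of an element `e ∈ T` lies in `T`
(i.e. `d ∈ X_{J(μ)}` and its sequence `t'` has at least `λ_i` good `i`'s for all `i`). -/
theorem stmt8 (m : ℕ) (μ : Composition m) (lam : ℕ → ℕ)
    (hpair : ∀ i, lam (i + 1) ≤ lam i ∧ lam i ≤ μ.blocks.getD i 0)
    (w0 e d : Equiv.Perm (Fin m))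
    (hw0 : inYoung μ w0) (hw0max : ∀ u, inYoung μ u → invLen u ≤ invLen w0)
    (he : isMinRep μ e)
    (t : List ℕ) (ht : ofTypeL μ t) (htw : isSeqPerm μ t (w0 * e⁻¹))
    (hgood : ∀ i, lam i ≤ goodCounts t i)
    (hpre : invLen e = invLen d + invLen (e * d⁻¹)) :
    isMinRep μ d ∧
      ∀ t' : List ℕ, ofTypeL μ t' → isSeqPerm μ t' (w0 * d⁻¹) →
        ∀ i, lam i ≤ goodCounts t' i := by
  exact Stmt8Aux.main_induction μ lam w0 d hw0 (invLen (e * d⁻¹)) e rfl he t ht htw hgood hpre
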